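/- Assume the Green function G is exponentially almost periodic. If f : ℝ → X is pseudo almost periodic, then u(t) := ∫_ℝ G(t,s) f(s) ds is pseudo almost periodic; more precisely, if f = g + φ with g almost periodic and φ ∈ PAP₀(ℝ,X), then t ↦ ∫_ℝ G(t,s) g(s) ds is almost periodic and t ↦ ∫_ℝ G(t,s) φ(s) ds belongs to PAP₀(ℝ,X). -/

import Mathlib

open MeasureTheory Real Filter Bornology

/-- An evolution family on a Banach space `X` together with an exponential dichotomy:
projections `P t`, the inverses `V s t` of the restrictions of `U t s` to the kernels
of the projections (i.e. `V s t = U_Q(s,t)` for `s ≤ t`), dichotomy constants `N, β`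
and a bound `H` on the norms of the projections. -/
structure EvolutionDichotomy (X : Type*) [NormedAddCommGroup X] [NormedSpace ℝ X] where
  U : ℝ → ℝ → X →L[ℝ] X
  P : ℝ → X →L[ℝ] X
  V : ℝ → ℝ → X →L[ℝ] X
  N : ℝ
  β : ℝ
  H : ℝ
  N_pos : 0 < N
  β_pos : 0 < β
  U_id : ∀ s, U s s = ContinuousLinearMap.id ℝ X
  U_comp : ∀ ⦃s r t : ℝ⦄, s ≤ r → r ≤ t → ∀ x, U t r (U r s x) = U t s x
  U_cont : ∀ x : X, ContinuousOn (fun p : ℝ × ℝ => U p.1 p.2 x) {p : ℝ × ℝ | p.2 ≤ p.1}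
  P_proj : ∀ t x, P t (P t x) = P t x
  P_cont : ∀ x : X, Continuous fun t => P t x
  P_bound : ∀ t, ‖P t‖ ≤ H
  comm : ∀ ⦃s t : ℝ⦄, s ≤ t → ∀ x, P t (U t s x) = U t s (P s x)
  V_mapsTo : ∀ ⦃s t : ℝ⦄, s ≤ t → ∀ x, P s (V s t (x - P t x)) = 0
  V_left : ∀ ⦃s t : ℝ⦄, s ≤ t → ∀ x, V s t (U t s (x - P s x)) = x - P s x
  V_right : ∀ ⦃s t : ℝ⦄, s ≤ t → ∀ x, U t s (V s t (x - P t x)) = x - P t x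
  P_decay : ∀ ⦃s t : ℝ⦄, s ≤ t → ∀ x, ‖U t s (P s x)‖ ≤ N * Real.exp (-β * (t - s)) * ‖x‖
  Q_decay : ∀ ⦃s t : ℝ⦄, s ≤ t → ∀ x, ‖V s t (x - P t x)‖ ≤ N * Real.exp (-β * (t - s)) * ‖x‖

namespace EvolutionDichotomy

variable {X : Type*} [NormedAddCommGroup X] [NormedSpace ℝ X]

/-- The complementary projection `Q t = Id - P t`. -/
noncomputable def Q (E : EvolutionDichotomy X) (t : ℝ) : X →L[ℝ] X :=
  ContinuousLinearMap.id ℝ X - E.P t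

/-- The Green function of the dichotomy: `G t s = P t ∘ U t s` for `t > s` and
`G t s = -(U_Q(t,s) ∘ Q s)` for `t ≤ s`. -/
noncomputable def G (E : EvolutionDichotomy X) (t s : ℝ) : X →L[ℝ] X :=
  if s < t then (E.P t).comp (E.U t s) else -((E.V t s).comp (E.Q s))

/-- The Green function is exponentially almost periodic. -/
def ExpAP (E : EvolutionDichotomy X) : Prop :=
  ∀ η > (0:ℝ), ∀ ε > (0:ℝ), ∃ γ > (0:ℝ), ∃ l > (0:ℝ), ∀ a : ℝ,
    ∃ T ∈ Set.Icc a (a + l), ∀ t s : ℝ, η ≤ |t - s| →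
      ‖E.G (t + T) (s + T) - E.G t s‖ ≤ ε * Real.exp (-γ * |t - s|)

end EvolutionDichotomy

/-- A bounded continuous function `f : ℝ → X` is (Bohr) almost periodic if for every `ε > 0`
there is `l > 0` such that every interval of length `l` contains an `ε`-almost period. -/
def AlmostPeriodic {X : Type*} [NormedAddCommGroup X] (f : ℝ → X) : Prop :=
  Continuous f ∧ Bornology.IsBounded (Set.range f) ∧
  ∀ ε > (0:ℝ), ∃ l > (0:ℝ), ∀ a : ℝ, ∃ T ∈ Set.Icc a (a + l),
    ∀ t : ℝ, ‖f (t + T) - f t‖ < ε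

/-- A function on `[0,∞)` is asymptotically almost periodic if it is the sum of an almost
periodic function and a continuous function vanishing at infinity. -/
def AsympAlmostPeriodic {X : Type*} [NormedAddCommGroup X] (g : ℝ → X) : Prop :=
  ∃ h φ : ℝ → X, AlmostPeriodic h ∧ ContinuousOn φ (Set.Ici 0) ∧
    Filter.Tendsto (fun t => ‖φ t‖) Filter.atTop (nhds 0) ∧
    ∀ t : ℝ, 0 ≤ t → g t = h t + φ t

/-- `PAP0`: bounded continuous functions with vanishing mean value. -/
def PAP0 {X : Type*} [NormedAddCommGroup X] (φ : ℝ → X) : Prop :=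
  Continuous φ ∧ Bornology.IsBounded (Set.range φ) ∧
  Filter.Tendsto (fun r : ℝ => (1 / (2 * r)) * ∫ t in (-r)..r, ‖φ t‖)
    Filter.atTop (nhds 0)

/-- A bounded continuous function is pseudo almost periodic if it is the sum of an almost
periodic function and a `PAP0` function. -/
def PseudoAP {X : Type*} [NormedAddCommGroup X] (f : ℝ → X) : Prop :=
  ∃ g φ : ℝ → X, AlmostPeriodic g ∧ PAP0 φ ∧ ∀ t : ℝ, f t = g t + φ t
open MeasureTheory Real Filter Bornology Set
open scoped Topology

namespace EvolutionDichotomy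
section Basics

variable {X : Type*} [NormedAddCommGroup X] [NormedSpace ℝ X]
variable (E : EvolutionDichotomy X)

lemma Q_apply (s : ℝ) (x : X) : E.Q s x = x - E.P s x := rfl

lemma G_of_lt {t s : ℝ} (h : s < t) (x : X) : E.G t s x = E.P t (E.U t s x) := by
  simp [EvolutionDichotomy.G, if_pos h]

lemma G_of_le {t s : ℝ} (h : t ≤ s) (x : X) : E.G t s x = -(E.V t s (E.Q s x)) := by
  simp [EvolutionDichotomy.G, if_neg (not_lt.2 h)]

lemma N_nonneg : 0 ≤ E.N := E.N_pos.le

lemma G_norm_le (t s : ℝ) (x : X) :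
    ‖E.G t s x‖ ≤ E.N * Real.exp (-E.β * |t - s|) * ‖x‖ := by
  rcases lt_or_ge s t with h | h
  · rw [G_of_lt E h, E.comm h.le, abs_of_pos (sub_pos.2 h)]
    exact E.P_decay h.le x
  · rw [G_of_le E h, norm_neg, Q_apply, abs_sub_comm, abs_of_nonneg (sub_nonneg.2 h)]
    exact E.Q_decay h x

lemma G_opNorm_le (t s : ℝ) : ‖E.G t s‖ ≤ E.N * Real.exp (-E.β * |t - s|) :=
  (E.G t s).opNorm_le_bound (mul_nonneg E.N_pos.le (Real.exp_pos _).le) (E.G_norm_le t s)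

end Basics
end EvolutionDichotomy

lemma exp_abs_le_one (b r : ℝ) (hb : 0 < b) : Real.exp (-b * |r|) ≤ 1 := by
  rw [Real.exp_le_one_iff]
  have : 0 ≤ b * |r| := by positivity
  linarith

namespace EvolutionDichotomy
section Basics
variable {X : Type*} [NormedAddCommGroup X] [NormedSpace ℝ X]
variable (E : EvolutionDichotomy X)

lemma G_opNorm_le' (t s : ℝ) : ‖E.G t s‖ ≤ E.N := by
  refine (E.G_opNorm_le t s).trans ?_
  have h1 := exp_abs_le_one E.β (t - s) E.β_pos
  nlinarith [E.N_pos]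

lemma G_norm_le' (t s : ℝ) (x : X) : ‖E.G t s x‖ ≤ E.N * ‖x‖ :=
  ((E.G t s).le_opNorm x).trans (by
    have := E.G_opNorm_le' t s
    nlinarith [norm_nonneg x])

lemma P_Q (s : ℝ) (x : X) : E.P s (E.Q s x) = 0 := by
  rw [Q_apply]
  rw [map_sub, E.P_proj, sub_self]

lemma V_Q_P_zero {t s : ℝ} (h : t ≤ s) (x : X) : E.P t (E.V t s (E.Q s x)) = 0 :=
  E.V_mapsTo h x

lemma U_V_Q {t s : ℝ} (h : t ≤ s) (x : X) : E.U s t (E.V t s (E.Q s x)) = E.Q s x :=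
  E.V_right h x

lemma V_U_y {t s : ℝ} (h : t ≤ s) {y : X} (hy : E.P t y = 0) :
    E.V t s (E.U s t y) = y := by
  have := E.V_left h y
  rwa [hy, sub_zero] at this

lemma key1 {t s s' : ℝ} (h1 : t ≤ s) (h2 : s ≤ s') (x : X) :
    E.V t s' (E.U s' s (E.Q s x)) = E.V t s (E.Q s x) := by
  have hz : E.P t (E.V t s (E.Q s x)) = 0 := E.V_Q_P_zero h1 x
  have h3 : E.U s' s (E.Q s x) = E.U s' t (E.V t s (E.Q s x)) := by
    conv_lhs => rw [← E.U_V_Q h1 x]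
    rw [E.U_comp h1 h2]
  rw [h3, E.V_U_y (h1.trans h2) hz]

lemma key2 {tm t s : ℝ} (h1 : tm ≤ t) (h2 : t ≤ s) (x : X) :
    E.U t tm (E.V tm s (E.Q s x)) = E.V t s (E.Q s x) := by
  set z := E.V tm s (E.Q s x) with hzdef
  have hPz : E.P tm z = 0 := E.V_Q_P_zero (h1.trans h2) x
  have hPw : E.P t (E.U t tm z) = 0 := by
    rw [E.comm h1, hPz, map_zero]
  have hUw : E.U s t (E.U t tm z) = E.Q s x := by
    rw [E.U_comp h1 h2]
    exact E.U_V_Q (h1.trans h2) x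
  have := E.V_U_y h2 hPw
  rw [hUw] at this
  exact this.symm

lemma key3 {t s s' : ℝ} (h1 : t ≤ s) (h2 : s ≤ s') (x : X) :
    ‖E.U s' s (E.Q s x)‖ ≤ ‖E.U s' t‖ * E.N * ‖x‖ := by
  have h3 : E.U s' s (E.Q s x) = E.U s' t (E.V t s (E.Q s x)) := by
    conv_lhs => rw [← E.U_V_Q h1 x]
    rw [E.U_comp h1 h2]
  rw [h3]
  have h4 : ‖E.V t s (E.Q s x)‖ ≤ E.N * ‖x‖ := by
    have := E.Q_decay h1 x
    rw [← Q_apply] at this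
    refine this.trans ?_
    have := exp_abs_le_one E.β (s - t) E.β_pos
    rw [abs_of_nonneg (sub_nonneg.2 h1)] at this
    nlinarith [mul_nonneg (mul_nonneg E.N_pos.le (sub_nonneg.2 this)) (norm_nonneg x)]
  calc ‖E.U s' t (E.V t s (E.Q s x))‖ ≤ ‖E.U s' t‖ * ‖E.V t s (E.Q s x)‖ :=
        (E.U s' t).le_opNorm _
    _ ≤ ‖E.U s' t‖ * (E.N * ‖x‖) := by
        exact mul_le_mul_of_nonneg_left h4 (norm_nonneg _)
    _ = ‖E.U s' t‖ * E.N * ‖x‖ := by ring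

lemma U_bound {t s s' : ℝ} (h1 : t ≤ s) (h2 : s ≤ s') (w : X) :
    ‖E.U s' s w‖ ≤ (E.N + ‖E.U s' t‖ * E.N) * ‖w‖ := by
  have hw : w = E.P s w + E.Q s w := by rw [Q_apply]; abel
  have : E.U s' s w = E.U s' s (E.P s w) + E.U s' s (E.Q s w) := by
    conv_lhs => rw [hw]
    rw [map_add]
  rw [this]
  refine (norm_add_le _ _).trans ?_
  have hP : ‖E.U s' s (E.P s w)‖ ≤ E.N * ‖w‖ := by
    refine (E.P_decay h2 w).trans ?_
    have := exp_abs_le_one E.β (s' - s) E.β_pos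
    rw [abs_of_nonneg (sub_nonneg.2 h2)] at this
    nlinarith [mul_nonneg (mul_nonneg E.N_pos.le (sub_nonneg.2 this)) (norm_nonneg w)]
  have hQ := E.key3 h1 h2 w
  nlinarith [norm_nonneg w]

end Basics
end EvolutionDichotomy

namespace EvolutionDichotomy
section Cont

variable {X : Type*} [NormedAddCommGroup X] [NormedSpace ℝ X]
variable (E : EvolutionDichotomy X)

lemma U_contAt_fst {s t₀ : ℝ} (h : s < t₀) (z : X) :
    ContinuousAt (fun t => E.U t s z) t₀ := by
  have h1 : ContinuousOn (fun t => E.U t s z) (Ici s) := by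
    have := (E.U_cont z).comp (f := fun t : ℝ => (t, s))
      ((continuous_id.prodMk continuous_const).continuousOn)
      (fun t (ht : t ∈ Ici s) => (show s ≤ t from ht))
    exact this
  exact h1.continuousAt (Ici_mem_nhds h)

lemma U_contAt_snd {t s₀ : ℝ} (h : s₀ < t) (z : X) :
    ContinuousAt (fun s => E.U t s z) s₀ := by
  have h1 : ContinuousOn (fun s => E.U t s z) (Iic t) := by
    have := (E.U_cont z).comp (f := fun s : ℝ => (t, s))
      ((continuous_const.prodMk continuous_id).continuousOn)
      (fun s (hs : s ∈ Iic t) => (show s ≤ t from hs))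
    exact this
  exact h1.continuousAt (Iic_mem_nhds h)

lemma contAt_apply_aux {A : ℝ → X →L[ℝ] X} {y : ℝ → X} {t₀ : ℝ} {C : ℝ}
    (hb : ∀ᶠ t in 𝓝 t₀, ∀ z : X, ‖A t z‖ ≤ C * ‖z‖)
    (hA : ContinuousAt (fun t => A t (y t₀)) t₀)
    (hy : ContinuousAt y t₀) :
    ContinuousAt (fun t => A t (y t)) t₀ := by
  have h1 : Tendsto (fun t => ‖y t - y t₀‖) (𝓝 t₀) (𝓝 0) :=
    tendsto_iff_norm_sub_tendsto_zero.mp (hy : Tendsto y (𝓝 t₀) (𝓝 (y t₀)))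
  have h2 : Tendsto (fun t => A t (y t) - A t (y t₀)) (𝓝 t₀) (𝓝 0) := by
    apply squeeze_zero_norm' ?_ (by simpa using h1.const_mul C)
    filter_upwards [hb] with t ht
    rw [← map_sub]
    exact ht _
  have h3 : Tendsto (fun t => A t (y t₀) - A t₀ (y t₀)) (𝓝 t₀) (𝓝 0) :=
    tendsto_sub_nhds_zero_iff.mpr hA
  have h4 := h2.add h3
  rw [add_zero] at h4
  have h5 : (fun t => (A t (y t) - A t (y t₀)) + (A t (y t₀) - A t₀ (y t₀)))
      = fun t => A t (y t) - A t₀ (y t₀) := by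
    funext t; abel
  rw [h5] at h4
  exact tendsto_sub_nhds_zero_iff.mp h4

lemma P_norm_le (t : ℝ) (z : X) : ‖E.P t z‖ ≤ E.H * ‖z‖ :=
  ((E.P t).le_opNorm z).trans (mul_le_mul_of_nonneg_right (E.P_bound t) (norm_nonneg z))

lemma contAt_G_fst {s t₀ : ℝ} (hne : t₀ ≠ s) (z : X) :
    ContinuousAt (fun t => E.G t s z) t₀ := by
  rcases lt_or_gt_of_ne hne with hlt | hgt
  · -- t₀ < s
    have hcont : ContinuousAt (fun t => -(E.U t (t₀ - 1) (E.V (t₀ - 1) s (E.Q s z)))) t₀ :=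
      (E.U_contAt_fst (by linarith) _).neg
    refine hcont.congr ?_
    filter_upwards [Ioo_mem_nhds (show t₀ - 1 < t₀ by linarith) hlt] with t ht
    rw [E.key2 ht.1.le ht.2.le z, E.G_of_le ht.2.le z]
  · -- s < t₀
    have hcont : ContinuousAt (fun t => E.P t (E.U t s z)) t₀ := by
      refine contAt_apply_aux (.of_forall fun t w => E.P_norm_le t w)
        ((E.P_cont _).continuousAt) (E.U_contAt_fst hgt z)
    refine hcont.congr ?_
    filter_upwards [Ioi_mem_nhds hgt] with t ht
    rw [E.G_of_lt ht z]

lemma contAt_G_snd {t s₀ : ℝ} (hne : s₀ ≠ t) (z : X) :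
    ContinuousAt (fun s => E.G t s z) s₀ := by
  rcases lt_or_gt_of_ne hne with hlt | hgt
  · -- s₀ < t
    have hcont : ContinuousAt (fun s => E.P t (E.U t s z)) s₀ :=
      ((E.P t).continuous.continuousAt).comp (E.U_contAt_snd hlt z)
    refine hcont.congr ?_
    filter_upwards [Iio_mem_nhds hlt] with s hs
    rw [E.G_of_lt hs z]
  · -- t < s₀
    have hQc : ContinuousAt (fun s => E.Q s z) s₀ := by
      have hq : (fun s => E.Q s z) = fun s => z - E.P s z := by
        funext s; rw [Q_apply]
      rw [hq]
      exact (continuous_const.sub (E.P_cont z)).continuousAt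
    have hth : ContinuousAt (fun s => E.U (s₀ + 1) s (E.Q s z)) s₀ := by
      refine contAt_apply_aux (C := E.N + ‖E.U (s₀ + 1) t‖ * E.N) ?_
        (E.U_contAt_snd (by linarith) (E.Q s₀ z)) hQc
      filter_upwards [Ioo_mem_nhds hgt (lt_add_one s₀)] with s hs w
      exact E.U_bound hs.1.le hs.2.le w
    have hcont : ContinuousAt (fun s => -(E.V t (s₀ + 1) (E.U (s₀ + 1) s (E.Q s z)))) s₀ :=
      (((E.V t (s₀ + 1)).continuous.continuousAt).comp hth).neg
    refine hcont.congr ?_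
    filter_upwards [Ioo_mem_nhds hgt (lt_add_one s₀)] with s hs
    rw [E.key1 hs.1.le hs.2.le z, E.G_of_le hs.1.le z]

lemma contAt_G_comp {t s₀ : ℝ} (hne : s₀ ≠ t) {h : ℝ → X} (hh : Continuous h) :
    ContinuousAt (fun s => E.G t s (h s)) s₀ :=
  contAt_apply_aux (A := E.G t) (.of_forall fun s z => E.G_norm_le' t s z)
    (E.contAt_G_snd hne (h s₀)) hh.continuousAt

end Cont
end EvolutionDichotomy

lemma integrable_exp_abs {b : ℝ} (hb : 0 < b) :
    MeasureTheory.Integrable (fun x : ℝ => Real.exp (-b * |x|)) := by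
  have h1 : IntegrableOn (fun x : ℝ => Real.exp (-b * |x|)) (Ioi 0) := by
    refine (exp_neg_integrableOn_Ioi 0 hb).congr_fun (fun x hx => ?_) measurableSet_Ioi
    rw [abs_of_pos hx]
  have h2 : IntegrableOn (fun x : ℝ => Real.exp (-b * |x|)) (Iic 0) := by
    rw [← Measure.map_neg_eq_self (volume : Measure ℝ)]
    have m : MeasurableEmbedding fun x : ℝ => -x := (Homeomorph.neg ℝ).measurableEmbedding
    rw [m.integrableOn_map_iff]
    simp only [Function.comp_def, abs_neg, neg_preimage, neg_Iic, neg_zero]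
    exact Iff.mpr integrableOn_Ici_iff_integrableOn_Ioi h1
  have h3 := h2.union h1
  rwa [Iic_union_Ioi, integrableOn_univ] at h3

lemma integrable_exp_abs_shift {b : ℝ} (hb : 0 < b) (t : ℝ) (c : ℝ) :
    MeasureTheory.Integrable (fun s : ℝ => c * Real.exp (-b * |t - s|)) := by
  have h1 := ((integrable_exp_abs hb).comp_sub_right t).const_mul c
  have h2 : (fun s : ℝ => c * Real.exp (-b * |t - s|))
      = fun s => c * Real.exp (-b * |s - t|) := by
    funext s; rw [abs_sub_comm]
  rw [h2]; exact h1

lemma integral_exp_abs_shift {b : ℝ} (t : ℝ) :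
    (∫ s : ℝ, Real.exp (-b * |t - s|)) = ∫ x : ℝ, Real.exp (-b * |x|) := by
  have h2 : (fun s : ℝ => Real.exp (-b * |t - s|))
      = fun s => Real.exp (-b * |s + -t|) := by
    funext s; rw [abs_sub_comm, sub_eq_add_neg]
  rw [h2]
  exact integral_add_right_eq_self (fun x => Real.exp (-b * |x|)) (-t)

namespace EvolutionDichotomy
section Integr

variable {X : Type*} [NormedAddCommGroup X] [NormedSpace ℝ X]
variable (E : EvolutionDichotomy X)

lemma aesm_G (t : ℝ) {h : ℝ → X} (hh : Continuous h) :
    AEStronglyMeasurable (fun s => E.G t s (h s)) volume := by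
  have h1 : AEStronglyMeasurable (fun s => E.G t s (h s)) (volume.restrict {t}ᶜ) := by
    refine ContinuousOn.aestronglyMeasurable ?_ (measurableSet_singleton t).compl
    intro s hs
    exact (E.contAt_G_comp (by simpa using hs) hh).continuousWithinAt
  have h2 : AEStronglyMeasurable (fun s => E.G t s (h s)) (volume.restrict {t}) := by
    have hz : volume.restrict ({t} : Set ℝ) = 0 := by
      rw [Measure.restrict_eq_zero]; exact measure_singleton t
    rw [hz]; exact aestronglyMeasurable_zero_measure _
  have h3 := h2.add_measure h1
  rwa [Measure.restrict_add_restrict_compl (measurableSet_singleton t)] at h3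

lemma G_pt_bound (t : ℝ) {h : ℝ → X} {M : ℝ} (hM : ∀ s, ‖h s‖ ≤ M) (s : ℝ) :
    ‖E.G t s (h s)‖ ≤ E.N * M * Real.exp (-E.β * |t - s|) := by
  calc ‖E.G t s (h s)‖ ≤ E.N * Real.exp (-E.β * |t - s|) * ‖h s‖ := E.G_norm_le t s _
    _ ≤ E.N * M * Real.exp (-E.β * |t - s|) := by
        nlinarith [mul_nonneg (mul_nonneg E.N_pos.le (Real.exp_pos (-E.β * |t - s|)).le)
          (sub_nonneg.2 (hM s))]

lemma integrable_G (t : ℝ) {h : ℝ → X} (hh : Continuous h) {M : ℝ} (hM : ∀ s, ‖h s‖ ≤ M) :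
    MeasureTheory.Integrable (fun s => E.G t s (h s)) := by
  refine (integrable_exp_abs_shift E.β_pos t (E.N * M)).mono' (E.aesm_G t hh) ?_
  exact .of_forall (E.G_pt_bound t hM)

lemma u_norm_le (t : ℝ) {h : ℝ → X} (hh : Continuous h) {M : ℝ} (hM : ∀ s, ‖h s‖ ≤ M) :
    ‖∫ s : ℝ, E.G t s (h s)‖ ≤ E.N * M * ∫ x : ℝ, Real.exp (-E.β * |x|) := by
  have h1 : ‖∫ s : ℝ, E.G t s (h s)‖ ≤ ∫ s : ℝ, (E.N * M) * Real.exp (-E.β * |t - s|) :=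
    norm_integral_le_of_norm_le (integrable_exp_abs_shift E.β_pos t _)
      (.of_forall (E.G_pt_bound t hM))
  refine h1.trans_eq ?_
  rw [MeasureTheory.integral_const_mul, integral_exp_abs_shift]

lemma u_continuous {h : ℝ → X} (hh : Continuous h) {M : ℝ} (hM : ∀ s, ‖h s‖ ≤ M) :
    Continuous fun t => ∫ s : ℝ, E.G t s (h s) := by
  rw [continuous_iff_continuousAt]
  intro t₀
  refine tendsto_integral_filter_of_dominated_convergence
    (fun s => (E.N * M * Real.exp E.β) * Real.exp (-E.β * |t₀ - s|)) ?_ ?_ ?_ ?_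
  · exact .of_forall fun t => E.aesm_G t hh
  · filter_upwards [Metric.ball_mem_nhds t₀ one_pos] with t ht
    refine .of_forall fun s => ?_
    have hd : |t₀ - s| - |t - s| ≤ 1 := by
      have h1 := abs_sub_abs_le_abs_sub (t₀ - s) (t - s)
      rw [show t₀ - s - (t - s) = t₀ - t by ring] at h1
      have h3 : |t₀ - t| ≤ 1 := by
        have := mem_ball_iff_norm.mp ht
        rw [Real.norm_eq_abs, abs_sub_comm] at this
        linarith
      linarith
    have hexp : Real.exp (-E.β * |t - s|) ≤ Real.exp E.β * Real.exp (-E.β * |t₀ - s|) := by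
      rw [← Real.exp_add]
      refine Real.exp_le_exp.2 ?_
      nlinarith [E.β_pos]
    calc ‖E.G t s (h s)‖ ≤ E.N * M * Real.exp (-E.β * |t - s|) := E.G_pt_bound t hM s
      _ ≤ E.N * M * Real.exp E.β * Real.exp (-E.β * |t₀ - s|) := by
          have hNM : 0 ≤ E.N * M := by
            have := (norm_nonneg (h 0)).trans (hM 0)
            nlinarith [E.N_pos]
          nlinarith [mul_nonneg hNM (Real.exp_pos (-E.β * |t - s|)).le,
            mul_le_mul_of_nonneg_left hexp hNM]
      _ = E.N * M * Real.exp E.β * Real.exp (-E.β * |t₀ - s|) := rfl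
  · exact integrable_exp_abs_shift E.β_pos t₀ _
  · have hae : ∀ᵐ s : ℝ, s ≠ t₀ := by
      have hset : {a : ℝ | ¬ a ≠ t₀} = {t₀} := by ext a; simp
      rw [ae_iff, hset]; exact measure_singleton t₀
    filter_upwards [hae] with s hs
    exact E.contAt_G_fst hs.symm (h s)

end Integr
end EvolutionDichotomy

section AP

variable {X : Type*} [NormedAddCommGroup X]

lemma ap_unifCont {g : ℝ → X} (hg : AlmostPeriodic g) :
    ∀ ε > (0:ℝ), ∃ δ > (0:ℝ), ∀ t τ : ℝ, |τ| < δ → ‖g (t + τ) - g t‖ < ε := by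
  intro ε hε
  obtain ⟨l, hl, hper⟩ := hg.2.2 (ε/3) (by linarith)
  have hcpt : IsCompact (Icc (-1:ℝ) (l+1)) := isCompact_Icc
  have huc := hcpt.uniformContinuousOn_of_continuous (hg.1.continuousOn)
  rw [Metric.uniformContinuousOn_iff] at huc
  obtain ⟨δ, hδ, hucδ⟩ := huc (ε/3) (by linarith)
  refine ⟨min δ 1, by positivity, ?_⟩
  intro t τ hτ
  have hτδ : |τ| < δ := lt_of_lt_of_le hτ (min_le_left _ _)
  have hτ1 : |τ| ≤ 1 := (lt_of_lt_of_le hτ (min_le_right _ _)).le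
  have hτ1' := abs_le.1 hτ1
  obtain ⟨T, hT, hTper⟩ := hper (-t)
  have hT1 : 0 ≤ t + T := by have := hT.1; linarith
  have hT2 : t + T ≤ l := by have := hT.2; linarith
  have h1 : t + T ∈ Icc (-1:ℝ) (l+1) := ⟨by linarith, by linarith⟩
  have h2 : t + τ + T ∈ Icc (-1:ℝ) (l+1) := ⟨by linarith, by linarith⟩
  have hmid : ‖g (t + τ + T) - g (t + T)‖ < ε/3 := by
    have := hucδ _ h2 _ h1 (by
      rw [Real.dist_eq, show t + τ + T - (t + T) = τ by ring]
      exact hτδ)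
    rwa [dist_eq_norm] at this
  have hfst : ‖g (t + τ) - g (t + τ + T)‖ < ε/3 := by
    have := hTper (t + τ)
    rwa [norm_sub_rev] at this
  have hlst : ‖g (t + T) - g t‖ < ε/3 := hTper t
  have htri1 := norm_sub_le_norm_sub_add_norm_sub (g (t+τ)) (g (t+τ+T)) (g t)
  have htri2 := norm_sub_le_norm_sub_add_norm_sub (g (t+τ+T)) (g (t+T)) (g t)
  linarith

lemma ap_net {g : ℝ → X} (hg : AlmostPeriodic g) :
    ∀ ε > (0:ℝ), ∃ F : Finset ℝ, F.Nonempty ∧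
      ∀ τ : ℝ, ∃ σ ∈ F, ∀ t, ‖g (t + τ) - g (t + σ)‖ ≤ ε := by
  intro ε hε
  obtain ⟨δ, hδ, huc⟩ := ap_unifCont hg (ε/2) (by linarith)
  obtain ⟨l, hl, hper⟩ := hg.2.2 (ε/2) (by linarith)
  set n := ⌈l / (δ/2)⌉₊ with hn
  refine ⟨(Finset.range (n+1)).image (fun k : ℕ => (k:ℝ) * (δ/2)),
    ⟨0, Finset.mem_image.2 ⟨0, Finset.mem_range.2 (Nat.succ_pos n), by simp⟩⟩, ?_⟩
  intro τ
  obtain ⟨T, hT, hTper⟩ := hper (-τ)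
  set σ' := τ + T with hσ'
  have hσ'1 : 0 ≤ σ' := by have := hT.1; rw [hσ']; linarith
  have hσ'2 : σ' ≤ l := by have := hT.2; rw [hσ']; linarith
  set k := ⌊σ' / (δ/2)⌋₊ with hkdef
  have hδ2 : (0:ℝ) < δ/2 := by linarith
  have hfl : (k:ℝ) ≤ σ' / (δ/2) := Nat.floor_le (by positivity)
  have hk : (k:ℝ) * (δ/2) ≤ σ' := by
    have := mul_le_mul_of_nonneg_right hfl hδ2.le
    rwa [div_mul_cancel₀ _ (ne_of_gt hδ2)] at this
  have hk2 : σ' < ((k:ℝ)+1) * (δ/2) := by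
    have h1 := Nat.lt_floor_add_one (σ' / (δ/2))
    have := mul_lt_mul_of_pos_right h1 hδ2
    rwa [div_mul_cancel₀ _ (ne_of_gt hδ2)] at this
  have hkn : k ≤ n := by
    have h2 : l / (δ/2) ≤ (n:ℝ) := Nat.le_ceil _
    have h3 : σ' / (δ/2) ≤ l / (δ/2) := by gcongr
    have h4 : (k:ℝ) ≤ (n:ℝ) := hfl.trans (h3.trans h2)
    exact_mod_cast h4
  refine ⟨(k:ℝ) * (δ/2), Finset.mem_image.2 ⟨k, Finset.mem_range.2 (by omega), rfl⟩, ?_⟩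
  intro t
  have hA : ‖g (t + τ) - g (t + σ')‖ ≤ ε/2 := by
    have h5 := hTper (t + τ)
    rw [show t + τ + T = t + σ' by rw [hσ']; ring] at h5
    rw [norm_sub_rev]; linarith
  have hB : ‖g (t + σ') - g (t + (k:ℝ)*(δ/2))‖ ≤ ε/2 := by
    have h6 := huc (t + (k:ℝ)*(δ/2)) (σ' - (k:ℝ)*(δ/2))
      (by rw [abs_of_nonneg (by linarith)]; linarith)
    rw [show t + (k:ℝ)*(δ/2) + (σ' - (k:ℝ)*(δ/2)) = t + σ' by ring] at h6
    linarith
  have htri := norm_sub_le_norm_sub_add_norm_sub (g (t+τ)) (g (t+σ')) (g (t + (k:ℝ)*(δ/2)))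
  linarith

end AP

section Common

variable {X : Type*} [NormedAddCommGroup X] [NormedSpace ℝ X]

lemma common_periods (E : EvolutionDichotomy X) (hE : E.ExpAP)
    {g : ℝ → X} (hg : AlmostPeriodic g) :
    ∀ ε₁ > (0:ℝ), ∀ η > (0:ℝ), ∀ ε₂ > (0:ℝ), ∃ γ > (0:ℝ), ∃ L > (0:ℝ), ∀ a : ℝ,
      ∃ T ∈ Set.Icc a (a + L), (∀ t, ‖g (t + T) - g t‖ ≤ ε₁) ∧
        (∀ t s : ℝ, η ≤ |t - s| →
          ‖E.G (t+T) (s+T) - E.G t s‖ ≤ ε₂ * Real.exp (-γ * |t - s|)) := by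
  intro ε₁ hε₁ η hη ε₂ hε₂
  obtain ⟨γ, hγ, lG, hlG, hEper⟩ := hE η hη (ε₂/2) (by linarith)
  obtain ⟨F, hFne, hFnet⟩ := ap_net hg (ε₁/2) (by linarith)
  classical
  set prop : ℝ → ℝ → Prop := fun v σ =>
    (∀ t s : ℝ, η ≤ |t - s| →
      ‖E.G (t+v) (s+v) - E.G t s‖ ≤ (ε₂/2) * Real.exp (-γ * |t - s|)) ∧
    (∀ t, ‖g (t + v) - g (t + σ)‖ ≤ ε₁/2) with hpropdef
  set vch : ℝ → ℝ := fun σ => if h : ∃ v, prop v σ then h.choose else 0 with hvch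
  set L₀ := (F.image (fun σ => |vch σ|)).max' (hFne.image _) with hL₀def
  have hL₀ : ∀ σ ∈ F, |vch σ| ≤ L₀ := fun σ hσ =>
    Finset.le_max' _ _ (Finset.mem_image_of_mem (fun σ => |vch σ|) hσ)
  have hL₀0 : 0 ≤ L₀ := by
    obtain ⟨σ, hσ⟩ := hFne
    exact (abs_nonneg _).trans (hL₀ σ hσ)
  refine ⟨γ, hγ, 2*L₀ + lG, by linarith, ?_⟩
  intro a
  obtain ⟨v, hv, hvper⟩ := hEper (a + L₀)
  obtain ⟨σ, hσF, hσnet⟩ := hFnet v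
  have hex : ∃ v', prop v' σ := ⟨v, hvper, hσnet⟩
  have hpσ : prop (vch σ) σ := by
    rw [hvch]; simp only; rw [dif_pos hex]; exact hex.choose_spec
  have hvσ := abs_le.1 (hL₀ σ hσF)
  refine ⟨v - vch σ, ⟨by linarith [hv.1], by linarith [hv.2]⟩, ?_, ?_⟩
  · intro t
    have h1 := hσnet (t - vch σ)
    have h2 := hpσ.2 (t - vch σ)
    rw [show t - vch σ + v = t + (v - vch σ) by ring] at h1
    rw [show t - vch σ + vch σ = t by ring] at h2
    rw [norm_sub_rev] at h2
    have htri := norm_sub_le_norm_sub_add_norm_sub (g (t + (v - vch σ)))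
      (g (t - vch σ + σ)) (g t)
    linarith
  · intro t s hts
    have habs : |t - vch σ - (s - vch σ)| = |t - s| := by
      rw [show t - vch σ - (s - vch σ) = t - s by ring]
    have h1 := hvper (t - vch σ) (s - vch σ) (by rw [habs]; exact hts)
    have h2 := hpσ.1 (t - vch σ) (s - vch σ) (by rw [habs]; exact hts)
    rw [habs] at h1 h2
    rw [show t - vch σ + v = t + (v - vch σ) by ring,
        show s - vch σ + v = s + (s - s) + (v - vch σ) by ring] at h1
    rw [show s + (s - s) + (v - vch σ) = s + (v - vch σ) by ring] at h1
    rw [show t - vch σ + vch σ = t by ring, show s - vch σ + vch σ = s by ring] at h2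
    have hG1 : E.G (t + (v - vch σ)) (s + (v - vch σ)) - E.G t s
        = (E.G (t + (v - vch σ)) (s + (v - vch σ)) - E.G (t - vch σ) (s - vch σ))
          - (E.G t s - E.G (t - vch σ) (s - vch σ)) := by abel
    rw [hG1]
    refine (norm_sub_le _ _).trans ?_
    rw [norm_sub_rev (E.G t s)] at *
    linarith [h1, h2]

end Common

namespace EvolutionDichotomy
section APu
set_option maxHeartbeats 1000000

variable {X : Type*} [NormedAddCommGroup X] [NormedSpace ℝ X] [CompleteSpace X]
variable (E : EvolutionDichotomy X)

lemma ap_estimate {g : ℝ → X} (hgc : Continuous g) {Mg : ℝ}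
    (hMg : ∀ s, ‖g s‖ ≤ Mg)
    {T η γ ε₁ ε₂ : ℝ} (hη : 0 < η) (hγ : 0 < γ) (hε₂ : 0 ≤ ε₂)
    (hT1 : ∀ t, ‖g (t + T) - g t‖ ≤ ε₁)
    (hT2 : ∀ t s : ℝ, η ≤ |t - s| →
      ‖E.G (t+T) (s+T) - E.G t s‖ ≤ ε₂ * Real.exp (-γ * |t - s|))
    (t : ℝ) :
    ‖(∫ s : ℝ, E.G (t+T) s (g s)) - ∫ s : ℝ, E.G t s (g s)‖ ≤
      4 * E.N * Mg * η
      + Real.sqrt (2 * E.N * ε₂) * Mg * (∫ x : ℝ, Real.exp (-(E.β/2) * |x|))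
      + E.N * ε₁ * (∫ x : ℝ, Real.exp (-E.β * |x|)) := by
  have hMg0 : 0 ≤ Mg := (norm_nonneg _).trans (hMg 0)
  set I1 : ℝ → X := fun s => E.G (t+T) (s+T) (g (s+T)) with hI1def
  set I2 : ℝ → X := fun s => E.G t s (g (s+T)) with hI2def
  set I3 : ℝ → X := fun s => E.G t s (g s) with hI3def
  have hgT : Continuous fun s : ℝ => g (s + T) := hgc.comp (continuous_add_right T)
  have hgTb : ∀ s : ℝ, ‖g (s + T)‖ ≤ Mg := fun s => hMg _
  have hI1 : MeasureTheory.Integrable I1 :=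
    (E.integrable_G (t+T) hgc hMg).comp_add_right T
  have hI2 : MeasureTheory.Integrable I2 := E.integrable_G t hgT hgTb
  have hI3 : MeasureTheory.Integrable I3 := E.integrable_G t hgc hMg
  have hshift : (∫ s : ℝ, E.G (t+T) s (g s)) = ∫ s : ℝ, I1 s :=
    (integral_add_right_eq_self (fun σ => E.G (t+T) σ (g σ)) T).symm
  rw [hshift, ← MeasureTheory.integral_sub hI1 hI3]
  have hsplit : (fun s => I1 s - I3 s) = fun s => (I1 s - I2 s) + (I2 s - I3 s) := by
    funext s; abel
  have hadd := MeasureTheory.integral_add (f := fun s => I1 s - I2 s)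
    (g := fun s => I2 s - I3 s) (hI1.sub hI2) (hI2.sub hI3)
  rw [hsplit, hadd]
  refine (norm_add_le _ _).trans ?_
  have termB : ‖∫ s : ℝ, (I2 s - I3 s)‖
      ≤ E.N * ε₁ * (∫ x : ℝ, Real.exp (-E.β * |x|)) := by
    have hpt : ∀ s : ℝ, ‖I2 s - I3 s‖ ≤ (E.N * ε₁) * Real.exp (-E.β * |t - s|) := by
      intro s
      have : I2 s - I3 s = E.G t s (g (s+T) - g s) := by
        rw [hI2def, hI3def]; simp [map_sub]
      rw [this]
      calc ‖E.G t s (g (s+T) - g s)‖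
          ≤ E.N * Real.exp (-E.β * |t - s|) * ‖g (s+T) - g s‖ := E.G_norm_le t s _
        _ ≤ (E.N * ε₁) * Real.exp (-E.β * |t - s|) := by
            nlinarith [mul_nonneg (mul_nonneg E.N_pos.le
              (Real.exp_pos (-E.β * |t - s|)).le) (sub_nonneg.2 (hT1 s)),
              norm_nonneg (g (s+T) - g s)]
    have := MeasureTheory.norm_integral_le_of_norm_le
      (integrable_exp_abs_shift E.β_pos t (E.N * ε₁)) (.of_forall hpt)
    refine this.trans_eq ?_
    rw [MeasureTheory.integral_const_mul, integral_exp_abs_shift]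
  have termA : ‖∫ s : ℝ, (I1 s - I2 s)‖ ≤ 4 * E.N * Mg * η
      + Real.sqrt (2 * E.N * ε₂) * Mg * (∫ x : ℝ, Real.exp (-(E.β/2) * |x|)) := by
    set A : Set ℝ := Ioo (t-η) (t+η) with hAdef
    have hAmeas : MeasurableSet A := measurableSet_Ioo
    have hD : MeasureTheory.Integrable (fun s => ‖I1 s - I2 s‖) := (hI1.sub hI2).norm
    have h0 := MeasureTheory.norm_integral_le_integral_norm (μ := volume) (fun s => I1 s - I2 s)
    refine h0.trans ?_
    rw [← MeasureTheory.integral_add_compl hAmeas hD]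
    have hpt : ∀ s : ℝ, ‖I1 s - I2 s‖ ≤ ‖E.G (t+T) (s+T) - E.G t s‖ * Mg := by
      intro s
      have : I1 s - I2 s = (E.G (t+T) (s+T) - E.G t s) (g (s+T)) := by
        rw [hI1def, hI2def]; simp [ContinuousLinearMap.sub_apply]
      rw [this]
      calc ‖(E.G (t+T) (s+T) - E.G t s) (g (s+T))‖
          ≤ ‖E.G (t+T) (s+T) - E.G t s‖ * ‖g (s+T)‖ :=
            ContinuousLinearMap.le_opNorm _ _
        _ ≤ ‖E.G (t+T) (s+T) - E.G t s‖ * Mg := by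
            exact mul_le_mul_of_nonneg_left (hMg _) (norm_nonneg _)
    have hA1 : (∫ s in A, ‖I1 s - I2 s‖) ≤ 4 * E.N * Mg * η := by
      have hb : ∀ s ∈ A, ‖I1 s - I2 s‖ ≤ 2 * E.N * Mg := by
        intro s _
        refine (hpt s).trans ?_
        have h1 : ‖E.G (t+T) (s+T) - E.G t s‖ ≤ 2 * E.N := by
          refine (norm_sub_le _ _).trans ?_
          have := E.G_opNorm_le' (t+T) (s+T)
          have := E.G_opNorm_le' t s
          linarith
        nlinarith
      have hmono := MeasureTheory.setIntegral_mono_on hD.integrableOn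
        (MeasureTheory.integrableOn_const measure_Ioo_lt_top.ne) hAmeas hb
      refine hmono.trans ?_
      rw [MeasureTheory.setIntegral_const]
      rw [measureReal_def, Real.volume_Ioo, show t + η - (t - η) = 2*η by ring]
      rw [ENNReal.toReal_ofReal (by linarith), smul_eq_mul]
      nlinarith
    have hA2 : (∫ s in Aᶜ, ‖I1 s - I2 s‖)
        ≤ Real.sqrt (2 * E.N * ε₂) * Mg * (∫ x : ℝ, Real.exp (-(E.β/2) * |x|)) := by
      set c := Real.sqrt (2 * E.N * ε₂) * Mg with hcdef
      have hc0 : 0 ≤ c := mul_nonneg (Real.sqrt_nonneg _) hMg0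
      have hb : ∀ s ∈ Aᶜ, ‖I1 s - I2 s‖ ≤ c * Real.exp (-(E.β/2) * |t - s|) := by
        intro s hs
        have hd : η ≤ |t - s| := by
          rw [hAdef] at hs
          simp only [mem_compl_iff, mem_Ioo, not_and_or, not_lt] at hs
          rcases hs with h | h
          · rw [abs_of_nonneg (by linarith)]; linarith
          · rw [abs_of_nonpos (by linarith)]; linarith
        have h2a := hT2 t s hd
        have h2b : ‖E.G (t+T) (s+T) - E.G t s‖ ≤ 2 * E.N * Real.exp (-E.β * |t - s|) := by
          refine (norm_sub_le _ _).trans ?_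
          have hx1 := E.G_opNorm_le (t+T) (s+T)
          rw [show t + T - (s + T) = t - s by ring] at hx1
          have hx2 := E.G_opNorm_le t s
          linarith
        set d := |t - s| with hddef
        have hmin : ‖E.G (t+T) (s+T) - E.G t s‖
            ≤ Real.sqrt ((ε₂ * Real.exp (-γ * d)) * (2 * E.N * Real.exp (-E.β * d))) := by
          set m := min (ε₂ * Real.exp (-γ * d)) (2 * E.N * Real.exp (-E.β * d)) with hmdef
          have hm0 : 0 ≤ m := le_min (mul_nonneg hε₂ (Real.exp_pos _).le)
            (mul_nonneg (by nlinarith [E.N_pos]) (Real.exp_pos _).le)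
          have hmle : ‖E.G (t+T) (s+T) - E.G t s‖ ≤ m := le_min h2a h2b
          refine hmle.trans ?_
          have hsq : m * m ≤ (ε₂ * Real.exp (-γ * d)) * (2 * E.N * Real.exp (-E.β * d)) :=
            mul_le_mul (min_le_left _ _) (min_le_right _ _) hm0
              (mul_nonneg hε₂ (Real.exp_pos _).le)
          calc m = Real.sqrt (m * m) := (Real.sqrt_mul_self hm0).symm
            _ ≤ _ := Real.sqrt_le_sqrt hsq
        have hsqrt : Real.sqrt ((ε₂ * Real.exp (-γ * d)) * (2 * E.N * Real.exp (-E.β * d)))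
            ≤ Real.sqrt (2 * E.N * ε₂) * Real.exp (-(E.β/2) * d) := by
          have he : (ε₂ * Real.exp (-γ * d)) * (2 * E.N * Real.exp (-E.β * d))
              = (2 * E.N * ε₂) * Real.exp (-(γ + E.β) * d) := by
            rw [show ε₂ * Real.exp (-γ*d) * (2*E.N*Real.exp (-E.β*d))
              = 2*E.N*ε₂*(Real.exp (-γ*d) * Real.exp (-E.β*d)) by ring,
              ← Real.exp_add, show -γ*d + -E.β*d = -(γ+E.β)*d by ring]
          rw [he, Real.sqrt_mul (by nlinarith [E.N_pos] : (0:ℝ) ≤ 2 * E.N * ε₂)]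
          have hee : Real.sqrt (Real.exp (-(γ + E.β) * d)) = Real.exp ((-(γ + E.β) * d)/2) :=
            (Real.exp_half _).symm
          rw [hee]
          refine mul_le_mul_of_nonneg_left ?_ (Real.sqrt_nonneg _)
          refine Real.exp_le_exp.2 ?_
          have hd0 : 0 ≤ d := abs_nonneg _
          nlinarith [hγ.le]
        refine (hpt s).trans ?_
        calc ‖E.G (t+T) (s+T) - E.G t s‖ * Mg
            ≤ (Real.sqrt (2 * E.N * ε₂) * Real.exp (-(E.β/2) * d)) * Mg := by
              exact mul_le_mul_of_nonneg_right (hmin.trans hsqrt) hMg0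
          _ = c * Real.exp (-(E.β/2) * d) := by rw [hcdef]; ring
      have hbint : MeasureTheory.Integrable (fun s => c * Real.exp (-(E.β/2) * |t - s|)) :=
        integrable_exp_abs_shift (by linarith [E.β_pos]) t c
      have hmono := MeasureTheory.setIntegral_mono_on hD.integrableOn
        hbint.integrableOn hAmeas.compl hb
      refine hmono.trans ?_
      have hle := MeasureTheory.setIntegral_le_integral (s := Aᶜ) hbint
        (.of_forall fun s => by positivity)
      refine hle.trans_eq ?_
      rw [MeasureTheory.integral_const_mul, integral_exp_abs_shift]
    linarith
  linarith

lemma frac_le {ε p : ℝ} (hε : 0 < ε) (hp : 0 ≤ p) : ε * p / (4 * (p + 1)) ≤ ε / 4 := by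
  rw [div_le_div_iff₀ (by linarith) (by norm_num)]
  nlinarith

lemma ap_u (hE : E.ExpAP) {g : ℝ → X} (hg : AlmostPeriodic g) :
    AlmostPeriodic (fun t => ∫ s : ℝ, E.G t s (g s)) := by
  obtain ⟨Mg, hMgr⟩ := isBounded_iff_forall_norm_le.1 hg.2.1
  have hMg : ∀ s, ‖g s‖ ≤ Mg := fun s => hMgr _ (mem_range_self s)
  have hMg0 : 0 ≤ Mg := (norm_nonneg _).trans (hMg 0)
  set Cβ := ∫ x : ℝ, Real.exp (-E.β * |x|) with hCβ
  set Ch := ∫ x : ℝ, Real.exp (-(E.β/2) * |x|) with hCh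
  have hCβ0 : 0 ≤ Cβ := MeasureTheory.integral_nonneg fun x => (Real.exp_pos _).le
  have hCh0 : 0 ≤ Ch := MeasureTheory.integral_nonneg fun x => (Real.exp_pos _).le
  refine ⟨E.u_continuous hg.1 hMg, ?_, ?_⟩
  · refine isBounded_iff_forall_norm_le.2 ⟨E.N * Mg * Cβ, ?_⟩
    rintro y ⟨t, rfl⟩
    exact E.u_norm_le t hg.1 hMg
  · intro ε hε
    set η := ε / (4 * (4 * E.N * Mg + 1)) with hηdef
    set q := ε / (4 * (Mg * Ch + 1)) with hqdef
    set ε₂ := q^2 / (2 * E.N) with hε₂def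
    set ε₁ := ε / (4 * (E.N * Cβ + 1)) with hε₁def
    have hNMg : 0 ≤ 4 * E.N * Mg := by nlinarith [E.N_pos]
    have hηpos : 0 < η := by rw [hηdef]; positivity
    have hqpos : 0 < q := by
      rw [hqdef]
      have : 0 < Mg * Ch + 1 := by nlinarith
      positivity
    have hε₂pos : 0 < ε₂ := by
      rw [hε₂def]
      exact div_pos (by positivity) (by nlinarith [E.N_pos])
    have hε₁pos : 0 < ε₁ := by
      rw [hε₁def]
      have : 0 < E.N * Cβ + 1 := by nlinarith [E.N_pos]
      positivity
    obtain ⟨γ, hγ, L, hL, hcommon⟩ := common_periods E hE hg ε₁ hε₁pos η hηpos ε₂ hε₂pos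
    refine ⟨L, hL, fun a => ?_⟩
    obtain ⟨T, hTmem, hT1, hT2⟩ := hcommon a
    refine ⟨T, hTmem, fun t => ?_⟩
    have hest := E.ap_estimate hg.1 hMg hηpos hγ hε₂pos.le hT1 hT2 t
    have hterm1 : 4 * E.N * Mg * η ≤ ε/4 := by
      rw [hηdef, show 4 * E.N * Mg * (ε / (4 * (4 * E.N * Mg + 1)))
        = ε * (4 * E.N * Mg) / (4 * (4 * E.N * Mg + 1)) by ring]
      exact frac_le hε hNMg
    have hsq : Real.sqrt (2 * E.N * ε₂) = q := by
      rw [hε₂def, show 2 * E.N * (q^2 / (2 * E.N)) = q^2 by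
        rw [mul_comm]; exact div_mul_cancel₀ _ (ne_of_gt (by nlinarith [E.N_pos]))]
      exact Real.sqrt_sq hqpos.le
    have hterm2 : Real.sqrt (2 * E.N * ε₂) * Mg * Ch ≤ ε/4 := by
      rw [hsq, hqdef]
      rw [show ε / (4 * (Mg * Ch + 1)) * Mg * Ch = ε * (Mg * Ch) / (4 * (Mg * Ch + 1)) by ring]
      exact frac_le hε (mul_nonneg hMg0 hCh0)
    have hterm3 : E.N * ε₁ * Cβ ≤ ε/4 := by
      rw [hε₁def]
      rw [show E.N * (ε / (4 * (E.N * Cβ + 1))) * Cβ = ε * (E.N * Cβ) / (4 * (E.N * Cβ + 1)) by ring]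
      exact frac_le hε (mul_nonneg E.N_pos.le hCβ0)
    calc ‖(∫ s : ℝ, E.G (t+T) s (g s)) - ∫ s : ℝ, E.G t s (g s)‖
        ≤ _ := hest
      _ ≤ ε/4 + ε/4 + ε/4 := by
          rw [← hCh, ← hCβ]
          exact add_le_add (add_le_add hterm1 hterm2) hterm3
      _ < ε := by linarith

end APu
end EvolutionDichotomy

namespace EvolutionDichotomy
section PAP
set_option maxHeartbeats 1000000

variable {X : Type*} [NormedAddCommGroup X] [NormedSpace ℝ X] [CompleteSpace X]
variable (E : EvolutionDichotomy X)

lemma exp_abs_cont (b t : ℝ) : Continuous fun s : ℝ => Real.exp (-b * |t - s|) :=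
  Real.continuous_exp.comp (continuous_const.mul (continuous_const.sub continuous_id).abs)

lemma u_ptwise_bound {φ : ℝ → X} (hφc : Continuous φ) {M : ℝ} (hM : ∀ s, ‖φ s‖ ≤ M)
    {R : ℝ} (hR : 0 < R) (t : ℝ) :
    ‖∫ s : ℝ, E.G t s (φ s)‖ ≤ E.N * (∫ x in (t-R)..(t+R), ‖φ x‖)
      + E.N * M * ((∫ x : ℝ, Real.exp (-E.β * |x|))
        - ∫ x in (-R)..R, Real.exp (-E.β * |x|)) := by
  have hMnn : 0 ≤ M := (norm_nonneg _).trans (hM 0)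
  set b : ℝ → ℝ := fun s => E.N * Real.exp (-E.β * |t - s|) * ‖φ s‖ with hbdef
  have hbc : Continuous b :=
    ((continuous_const.mul (exp_abs_cont E.β t)).mul hφc.norm)
  have hbnn : ∀ s, 0 ≤ b s := fun s =>
    mul_nonneg (mul_nonneg E.N_pos.le (Real.exp_pos _).le) (norm_nonneg _)
  have hbint : MeasureTheory.Integrable b := by
    refine (integrable_exp_abs_shift E.β_pos t (E.N * M)).mono'
      hbc.aestronglyMeasurable (.of_forall fun s => ?_)
    rw [Real.norm_eq_abs, abs_of_nonneg (hbnn s)]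
    show E.N * Real.exp (-E.β * |t - s|) * ‖φ s‖ ≤ E.N * M * Real.exp (-E.β * |t - s|)
    nlinarith [mul_nonneg (mul_nonneg E.N_pos.le (Real.exp_pos (-E.β * |t - s|)).le)
      (sub_nonneg.2 (hM s))]
  have h0 : ‖∫ s : ℝ, E.G t s (φ s)‖ ≤ ∫ s : ℝ, b s :=
    MeasureTheory.norm_integral_le_of_norm_le hbint (.of_forall fun s => E.G_norm_le t s (φ s))
  set A : Set ℝ := Icc (t-R) (t+R) with hAdef
  have hsplitb : (∫ s : ℝ, b s) = (∫ s in A, b s) + ∫ s in Aᶜ, b s :=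
    (MeasureTheory.integral_add_compl measurableSet_Icc hbint).symm
  have h1 : (∫ s in A, b s) ≤ ∫ s in A, E.N * ‖φ s‖ := by
    refine MeasureTheory.setIntegral_mono_on hbint.integrableOn
      ((continuous_const.mul hφc.norm).integrableOn_Icc) measurableSet_Icc (fun s _ => ?_)
    show E.N * Real.exp (-E.β * |t - s|) * ‖φ s‖ ≤ E.N * ‖φ s‖
    have he := exp_abs_le_one E.β (t - s) E.β_pos
    nlinarith [mul_nonneg E.N_pos.le (norm_nonneg (φ s)),
      mul_nonneg (mul_nonneg E.N_pos.le (norm_nonneg (φ s))) (sub_nonneg.2 he)]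
  have h2 : (∫ s in A, E.N * ‖φ s‖) = E.N * ∫ x in (t-R)..(t+R), ‖φ x‖ := by
    rw [hAdef, MeasureTheory.integral_Icc_eq_integral_Ioc,
      ← intervalIntegral.integral_of_le (by linarith : t - R ≤ t + R),
      ← intervalIntegral.integral_const_mul]
  have h3 : (∫ s in Aᶜ, b s) ≤ ∫ s in Aᶜ, (E.N * M) * Real.exp (-E.β * |t - s|) := by
    refine MeasureTheory.setIntegral_mono_on hbint.integrableOn
      (integrable_exp_abs_shift E.β_pos t (E.N * M)).integrableOn
      measurableSet_Icc.compl (fun s _ => ?_)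
    show E.N * Real.exp (-E.β * |t - s|) * ‖φ s‖ ≤ E.N * M * Real.exp (-E.β * |t - s|)
    nlinarith [mul_nonneg (mul_nonneg E.N_pos.le (Real.exp_pos (-E.β * |t - s|)).le)
      (sub_nonneg.2 (hM s))]
  have h4 : (∫ s in Aᶜ, (E.N * M) * Real.exp (-E.β * |t - s|))
      = E.N * M * ((∫ x : ℝ, Real.exp (-E.β * |x|))
        - ∫ x in (-R)..R, Real.exp (-E.β * |x|)) := by
    have hint : MeasureTheory.Integrable (fun s => Real.exp (-E.β * |t - s|)) := by
      have := integrable_exp_abs_shift E.β_pos t 1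
      simpa using this
    have hc : (∫ s in A, Real.exp (-E.β * |t - s|)) + (∫ s in Aᶜ, Real.exp (-E.β * |t - s|))
        = ∫ s : ℝ, Real.exp (-E.β * |t - s|) :=
      MeasureTheory.integral_add_compl measurableSet_Icc hint
    have hA3 : (∫ s in A, Real.exp (-E.β * |t - s|)) = ∫ x in (-R)..R, Real.exp (-E.β * |x|) := by
      rw [hAdef, MeasureTheory.integral_Icc_eq_integral_Ioc,
        ← intervalIntegral.integral_of_le (by linarith : t - R ≤ t + R)]
      have hcongr : (∫ x in (t-R)..(t+R), Real.exp (-E.β * |t - x|))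
          = ∫ x in (t-R)..(t+R), Real.exp (-E.β * |x - t|) := by
        refine intervalIntegral.integral_congr (fun x _ => ?_)
        rw [abs_sub_comm]
      rw [hcongr]
      have := intervalIntegral.integral_comp_sub_right
        (a := t - R) (b := t + R) (fun y => Real.exp (-E.β * |y|)) t
      rw [this, show t - R - t = -R by ring, show t + R - t = R by ring]
    have hfull : (∫ s : ℝ, Real.exp (-E.β * |t - s|)) = ∫ x : ℝ, Real.exp (-E.β * |x|) :=
      integral_exp_abs_shift t
    rw [MeasureTheory.integral_const_mul]
    rw [show (∫ s in Aᶜ, Real.exp (-E.β * |t - s|))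
      = (∫ s : ℝ, Real.exp (-E.β * |t - s|)) - ∫ s in A, Real.exp (-E.β * |t - s|) by
        linarith [hc]]
    rw [hA3, hfull]
  linarith [h0, hsplitb, h1, h2, h3, h4]

lemma pap0_u {φ : ℝ → X} (hφ : PAP0 φ) :
    PAP0 (fun t => ∫ s : ℝ, E.G t s (φ s)) := by
  obtain ⟨Mr, hMr⟩ := isBounded_iff_forall_norm_le.1 hφ.2.1
  have hM : ∀ s, ‖φ s‖ ≤ Mr := fun s => hMr _ (mem_range_self s)
  have hM0 : 0 ≤ Mr := (norm_nonneg _).trans (hM 0)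
  set u : ℝ → X := fun t => ∫ s : ℝ, E.G t s (φ s) with hudef
  have huc : Continuous u := E.u_continuous hφ.1 hM
  refine ⟨huc, ?_, ?_⟩
  · refine isBounded_iff_forall_norm_le.2 ⟨E.N * Mr * ∫ x : ℝ, Real.exp (-E.β * |x|), ?_⟩
    rintro y ⟨t, rfl⟩
    exact E.u_norm_le t hφ.1 hM
  · have hmt : Tendsto (fun r : ℝ => 1/(2*r) * ∫ t in (-r)..r, ‖φ t‖) atTop (𝓝 0) := hφ.2.2
    set Cβ := ∫ x : ℝ, Real.exp (-E.β * |x|) with hCβdef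
    set cfun : ℝ → ℝ := fun R => Cβ - ∫ x in (-R)..R, Real.exp (-E.β * |x|) with hcdef
    have hcten : Tendsto cfun atTop (𝓝 0) := by
      have h1 := MeasureTheory.intervalIntegral_tendsto_integral
        (integrable_exp_abs E.β_pos) tendsto_neg_atTop_atBot tendsto_id
      have h2 := (tendsto_const_nhds (x := Cβ) (f := atTop)).sub h1
      rw [sub_self] at h2
      exact h2
    rw [Metric.tendsto_atTop]
    intro ε hε
    obtain ⟨R₀, hR₀⟩ := Metric.tendsto_atTop.1 (hcten.const_mul (E.N * Mr)) (ε/4) (by linarith)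
    set R := max R₀ 1 with hRdef
    have hRpos : (0:ℝ) < R := lt_of_lt_of_le one_pos (le_max_right _ _)
    have hcR : |E.N * Mr * cfun R| < ε/4 := by
      have h12 := hR₀ R (le_max_left _ _)
      rw [Real.dist_eq, mul_zero, sub_zero] at h12
      exact h12
    have hmR : Tendsto (fun r : ℝ => (4*E.N*R) * (1/(2*(r+R)) * ∫ t in (-(r+R))..(r+R), ‖φ t‖))
        atTop (𝓝 0) := by
      have hcomp := hmt.comp (tendsto_atTop_add_const_right atTop R tendsto_id)
      have := hcomp.const_mul (4*E.N*R)
      rwa [mul_zero] at this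
    obtain ⟨r₁, hr₁⟩ := Metric.tendsto_atTop.1 hmR (ε/4) (by linarith)
    refine ⟨max (max R 1) r₁, fun r hr => ?_⟩
    have hrR : R ≤ r := le_trans (le_max_left _ _) (le_trans (le_max_left _ _) hr)
    have hr1 : (1:ℝ) ≤ r := le_trans (le_max_right _ _) (le_trans (le_max_left _ _) hr)
    have hrr1 : r₁ ≤ r := le_trans (le_max_right _ _) hr
    have hrpos : (0:ℝ) < r := lt_of_lt_of_le one_pos hr1
    set m := 1/(2*(r+R)) * ∫ t in (-(r+R))..(r+R), ‖φ t‖ with hmdef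
    have hφn : Continuous fun x : ℝ => ‖φ x‖ := hφ.1.norm
    have hmnn : 0 ≤ m := by
      rw [hmdef]
      refine mul_nonneg (by positivity) ?_
      exact intervalIntegral.integral_nonneg (by linarith) (fun x _ => norm_nonneg _)
    set Ψ : ℝ → ℝ := fun y => ∫ x in (0:ℝ)..y, ‖φ x‖ with hΨdef
    have hΨc : Continuous Ψ :=
      intervalIntegral.continuous_primitive (fun a b => hφn.intervalIntegrable a b) 0
    have hΨsub : ∀ a c : ℝ, Ψ c - Ψ a = ∫ x in a..c, ‖φ x‖ := fun a c =>
      intervalIntegral.integral_interval_sub_left (hφn.intervalIntegrable 0 c)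
        (hφn.intervalIntegrable 0 a)
    have hΨmono : ∀ a c : ℝ, a ≤ c → Ψ a ≤ Ψ c := by
      intro a c hac
      have h1 := hΨsub a c
      have h2 : (0:ℝ) ≤ ∫ x in a..c, ‖φ x‖ :=
        intervalIntegral.integral_nonneg hac (fun x _ => norm_nonneg _)
      linarith
    have hpt : ∀ t : ℝ, ‖u t‖ ≤ E.N * (Ψ (t+R) - Ψ (t-R)) + E.N * Mr * cfun R := by
      intro t
      have h1 := E.u_ptwise_bound hφ.1 hM hRpos t
      rw [← hΨsub (t-R) (t+R)] at h1
      exact h1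
    -- averaging
    have hInt1 : IntervalIntegrable (fun t => ‖u t‖) volume (-r) r :=
      (huc.norm).intervalIntegrable _ _
    have hcontrhs : Continuous fun t => E.N * (Ψ (t+R) - Ψ (t-R)) + E.N * Mr * cfun R :=
      ((continuous_const.mul ((hΨc.comp (continuous_add_right R)).sub
        (hΨc.comp (continuous_sub_right R)))).add continuous_const)
    have hInt2 : IntervalIntegrable (fun t => E.N * (Ψ (t+R) - Ψ (t-R)) + E.N * Mr * cfun R)
        volume (-r) r := hcontrhs.intervalIntegrable _ _
    have havg1 : (∫ t in (-r)..r, ‖u t‖)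
        ≤ ∫ t in (-r)..r, (E.N * (Ψ (t+R) - Ψ (t-R)) + E.N * Mr * cfun R) :=
      intervalIntegral.integral_mono_on (by linarith) hInt1 hInt2 (fun t _ => hpt t)
    -- compute/estimate RHS
    have hIΨ1 : IntervalIntegrable (fun t => Ψ (t+R)) volume (-r) r :=
      (hΨc.comp (continuous_add_right R)).intervalIntegrable _ _
    have hIΨ2 : IntervalIntegrable (fun t => Ψ (t-R)) volume (-r) r :=
      (hΨc.comp (continuous_sub_right R)).intervalIntegrable _ _
    have hsplit2 : (∫ t in (-r)..r, (E.N * (Ψ (t+R) - Ψ (t-R)) + E.N * Mr * cfun R))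
        = E.N * ((∫ t in (-r)..r, Ψ (t+R)) - (∫ t in (-r)..r, Ψ (t-R)))
          + (2*r) * (E.N * Mr * cfun R) := by
      rw [intervalIntegral.integral_add ((hIΨ1.sub hIΨ2).const_mul E.N)
        (intervalIntegrable_const (c := E.N * Mr * cfun R) (μ := volume)),
        intervalIntegral.integral_const_mul,
        intervalIntegral.integral_sub hIΨ1 hIΨ2, intervalIntegral.integral_const,
        smul_eq_mul, show r - (-r) = 2*r by ring]
    have hshift1 : (∫ t in (-r)..r, Ψ (t+R)) = ∫ y in (-r+R)..(r+R), Ψ y :=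
      intervalIntegral.integral_comp_add_right Ψ R
    have hshift2 : (∫ t in (-r)..r, Ψ (t-R)) = ∫ y in (-r-R)..(r-R), Ψ y :=
      intervalIntegral.integral_comp_sub_right Ψ R
    have hadj1 : (∫ y in (-r+R)..(r-R), Ψ y) + (∫ y in (r-R)..(r+R), Ψ y)
        = ∫ y in (-r+R)..(r+R), Ψ y :=
      intervalIntegral.integral_add_adjacent_intervals (hΨc.intervalIntegrable _ _)
        (hΨc.intervalIntegrable _ _)
    have hadj2 : (∫ y in (-r-R)..(-r+R), Ψ y) + (∫ y in (-r+R)..(r-R), Ψ y)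
        = ∫ y in (-r-R)..(r-R), Ψ y :=
      intervalIntegral.integral_add_adjacent_intervals (hΨc.intervalIntegrable _ _)
        (hΨc.intervalIntegrable _ _)
    have hb1 : (∫ y in (r-R)..(r+R), Ψ y) ≤ (2*R) * Ψ (r+R) := by
      have h5 := intervalIntegral.integral_mono_on (show r-R ≤ r+R by linarith)
        (hΨc.intervalIntegrable _ _) (intervalIntegrable_const (c := Ψ (r+R)) (μ := volume))
        (fun y hy => hΨmono _ _ hy.2)
      rw [intervalIntegral.integral_const, smul_eq_mul,
        show r + R - (r - R) = 2*R by ring] at h5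
      exact h5
    have hb2 : (2*R) * Ψ (-r-R) ≤ ∫ y in (-r-R)..(-r+R), Ψ y := by
      have h5 := intervalIntegral.integral_mono_on (show -r-R ≤ -r+R by linarith)
        (intervalIntegrable_const (c := Ψ (-r-R)) (μ := volume)) (hΨc.intervalIntegrable _ _)
        (fun y hy => hΨmono _ _ hy.1)
      rw [intervalIntegral.integral_const, smul_eq_mul,
        show -r + R - (-r - R) = 2*R by ring] at h5
      exact h5
    have hItot : Ψ (r+R) - Ψ (-r-R) = ∫ x in (-r-R)..(r+R), ‖φ x‖ := hΨsub _ _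
    have hIm : (∫ x in (-r-R)..(r+R), ‖φ x‖) = 2*(r+R) * m := by
      rw [hmdef, show -(r+R) = -r-R by ring]
      have h2rR : (2*(r+R)) ≠ 0 := by positivity
      field_simp
    have hJ : (∫ t in (-r)..r, Ψ (t+R)) - (∫ t in (-r)..r, Ψ (t-R))
        ≤ 2*R * (2*(r+R)*m) := by
      rw [hshift1, hshift2]
      have h6 : (∫ y in (-r+R)..(r+R), Ψ y) - (∫ y in (-r-R)..(r-R), Ψ y)
          = (∫ y in (r-R)..(r+R), Ψ y) - (∫ y in (-r-R)..(-r+R), Ψ y) := by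
        linarith [hadj1, hadj2]
      rw [h6]
      have h7 : Ψ (r+R) - Ψ (-r-R) = 2*(r+R)*m := by rw [hItot, hIm]
      nlinarith [hb1, hb2]
    -- final arithmetic
    have hS : (∫ t in (-r)..r, ‖u t‖) ≤ 8*E.N*R*r*m + (2*r) * (E.N * Mr * cfun R) := by
      have h8 : E.N * ((∫ t in (-r)..r, Ψ (t+R)) - (∫ t in (-r)..r, Ψ (t-R)))
          ≤ E.N * (2*R*(2*(r+R)*m)) :=
        mul_le_mul_of_nonneg_left hJ E.N_pos.le
      have h9 : E.N * (2*R*(2*(r+R)*m)) ≤ 8*E.N*R*r*m := by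
        nlinarith [mul_nonneg (mul_nonneg E.N_pos.le hRpos.le) hmnn]
      linarith [havg1, hsplit2]
    have hmean : 1/(2*r) * (∫ t in (-r)..r, ‖u t‖) ≤ 4*E.N*R*m + E.N * Mr * cfun R := by
      have h10 : 1/(2*r) * (∫ t in (-r)..r, ‖u t‖)
          ≤ 1/(2*r) * (8*E.N*R*r*m + (2*r) * (E.N * Mr * cfun R)) :=
        mul_le_mul_of_nonneg_left hS (by positivity)
      have h11 : 1/(2*r) * (8*E.N*R*r*m + (2*r) * (E.N * Mr * cfun R))
          = 4*E.N*R*m + E.N * Mr * cfun R := by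
        field_simp
        ring
      linarith
    have hmean0 : 0 ≤ 1/(2*r) * (∫ t in (-r)..r, ‖u t‖) := by
      refine mul_nonneg (by positivity) ?_
      exact intervalIntegral.integral_nonneg (by linarith) (fun x _ => norm_nonneg _)
    rw [Real.dist_eq, sub_zero, abs_of_nonneg hmean0]
    have hterm1 : 4*E.N*R*m < ε/4 := by
      have := hr₁ r hrr1
      rw [Real.dist_eq, sub_zero] at this
      calc 4*E.N*R*m = 4*E.N*R * (1/(2*(r+R)) * ∫ t in (-(r+R))..(r+R), ‖φ t‖) := by
            rw [← hmdef]
        _ ≤ |4*E.N*R * (1/(2*(r+R)) * ∫ t in (-(r+R))..(r+R), ‖φ t‖)| := le_abs_self _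
        _ < ε/4 := this
    have hterm2 : E.N * Mr * cfun R < ε/4 := (le_abs_self _).trans_lt hcR
    linarith
end PAP
end EvolutionDichotomy

/-- if the Green function is exponentially almost periodic and
`f = g + φ` is pseudo almost periodic (`g` almost periodic, `φ ∈ PAP₀`), then
`u(t) = ∫_ℝ G(t,s) f(s) ds` is pseudo almost periodic; more precisely
`t ↦ ∫_ℝ G(t,s) g(s) ds` is almost periodic and
`t ↦ ∫_ℝ G(t,s) φ(s) ds` belongs to `PAP₀`. -/
theorem green_convolution_pseudo_almost_periodic
    {X : Type*} [NormedAddCommGroup X] [NormedSpace ℝ X] [CompleteSpace X]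
    (E : EvolutionDichotomy X) (hE : E.ExpAP)
    (f g φ : ℝ → X)
    (hg : AlmostPeriodic g) (hφ : PAP0 φ)
    (hf : ∀ t : ℝ, f t = g t + φ t) :
    PseudoAP (fun t : ℝ => ∫ s : ℝ, E.G t s (f s)) ∧
    AlmostPeriodic (fun t : ℝ => ∫ s : ℝ, E.G t s (g s)) ∧
    PAP0 (fun t : ℝ => ∫ s : ℝ, E.G t s (φ s)) := by
  have hgap : AlmostPeriodic (fun t => ∫ s : ℝ, E.G t s (g s)) := E.ap_u hE hg
  have hφp : PAP0 (fun t => ∫ s : ℝ, E.G t s (φ s)) := E.pap0_u hφ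
  obtain ⟨Mg, hMgr⟩ := isBounded_iff_forall_norm_le.1 hg.2.1
  have hMg : ∀ s, ‖g s‖ ≤ Mg := fun s => hMgr _ (Set.mem_range_self s)
  obtain ⟨Mφ, hMφr⟩ := isBounded_iff_forall_norm_le.1 hφ.2.1
  have hMφ : ∀ s, ‖φ s‖ ≤ Mφ := fun s => hMφr _ (Set.mem_range_self s)
  have hdecomp : ∀ t : ℝ, (∫ s : ℝ, E.G t s (f s))
      = (∫ s : ℝ, E.G t s (g s)) + ∫ s : ℝ, E.G t s (φ s) := by
    intro t
    have h1 : (fun s => E.G t s (f s)) = fun s => E.G t s (g s) + E.G t s (φ s) :=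
      funext fun s => by rw [hf s, map_add]
    rw [h1, MeasureTheory.integral_add (E.integrable_G t hg.1 hMg)
      (E.integrable_G t hφ.1 hMφ)]
  exact ⟨⟨_, _, hgap, hφp, hdecomp⟩, hgap, hφp⟩
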